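/- Let φ, ψ be injective commuting endomorphisms of an abelian group G with finite cokernels. If φ(G) ∩ ψ(G) = φψ(G), then φ(G) + ψ(G) = G. -/

import Mathlib

theorem stmt3 {G : Type*} [AddCommGroup G] (φ ψ : G →+ G)
    (hφ : Function.Injective φ) (hψ : Function.Injective ψ)
    (hc : φ.comp ψ = ψ.comp φ)
    (h1 : Finite (G ⧸ φ.range)) (h2 : Finite (G ⧸ ψ.range))
    (h : φ.range ⊓ ψ.range = (φ.comp ψ).range) :
    φ.range ⊔ ψ.range = ⊤ := by
  have hcomap : ((φ.comp ψ).range).comap φ = ψ.range := by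
    ext x
    simp only [AddSubgroup.mem_comap, AddMonoidHom.mem_range, AddMonoidHom.coe_comp,
      Function.comp_apply]
    constructor
    · rintro ⟨y, hy⟩
      exact ⟨y, hφ hy⟩
    · rintro ⟨y, rfl⟩
      exact ⟨y, rfl⟩
  have key : ψ.range.relIndex (φ.range ⊔ ψ.range) = ψ.range.index := by
    rw [AddSubgroup.relIndex_sup_right, ← AddSubgroup.inf_relIndex_left, h,
      ← AddSubgroup.index_comap, hcomap]
  have hmul := AddSubgroup.relIndex_mul_index (le_sup_right : ψ.range ≤ φ.range ⊔ ψ.range)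
  rw [key] at hmul
  have hne : ψ.range.index ≠ 0 := AddSubgroup.index_ne_zero_of_finite
  have : (φ.range ⊔ ψ.range).index = 1 := by
    nlinarith [Nat.one_le_iff_ne_zero.mpr hne]
  exact AddSubgroup.index_eq_one.mp this
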